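/- Let I be a zero-dimensional radical ideal in ℝ[x₁,…,x_n] (or ℂ[x₁,…,x_n]) with finite vanishing set V = {v₁,…,v_N} ⊂ ℂⁿ of cardinality N equal to the dimension of the quotient ring. Let P be a polynomial with P(v_i) ≠ P(v_j) for i ≠ j, and let B = {b₁,…,b_N} reduce to a vector space basis of ℂ[x]/I. Then the matrix M of multiplication by P in the basis B is diagonalizable, and for each i, P(v_i) is an eigenvalue of M with left eigenvector (b₁(v_i),…,b_N(v_i)). -/

import Mathlib

open Matrix MvPolynomial

theorem action_matrix_eigenvalue_theorem
    (n N : ℕ) (I : Ideal (MvPolynomial (Fin n) ℂ)) (hrad : I.IsRadical)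
    (v : Fin N → (Fin n → ℂ)) (hv : Function.Injective v)
    (hV : ∀ x : Fin n → ℂ,
      (∀ p ∈ I, MvPolynomial.eval x p = 0) ↔ ∃ i, x = v i)
    (hdim : Module.finrank ℂ (MvPolynomial (Fin n) ℂ ⧸ I) = N)
    (P : MvPolynomial (Fin n) ℂ)
    (hsep : ∀ i j : Fin N, i ≠ j →
      MvPolynomial.eval (v i) P ≠ MvPolynomial.eval (v j) P)
    (b : Fin N → MvPolynomial (Fin n) ℂ)
    (basis : Module.Basis (Fin N) ℂ (MvPolynomial (Fin n) ℂ ⧸ I))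
    (hbasis : ∀ i, basis i = Ideal.Quotient.mk I (b i))
    (M : Matrix (Fin N) (Fin N) ℂ)
    (hM : M = LinearMap.toMatrix basis basis
      (LinearMap.mulLeft ℂ (Ideal.Quotient.mk I P))) :
    (∃ Q : Matrix (Fin N) (Fin N) ℂ, IsUnit Q ∧
        M = Q * Matrix.diagonal (fun i => MvPolynomial.eval (v i) P) * Q⁻¹) ∧
      ∀ i : Fin N,
        Matrix.vecMul (fun j => MvPolynomial.eval (v i) (b j)) M =
          MvPolynomial.eval (v i) P • fun j => MvPolynomial.eval (v i) (b j) := by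
  classical
  -- evaluation at v i kills I
  have hvan : ∀ i : Fin N, ∀ p ∈ I, MvPolynomial.aeval (v i) p = 0 := by
    intro i p hp
    have h := (hV (v i)).mpr ⟨i, rfl⟩ p hp
    rw [show ((MvPolynomial.aeval (v i)) p : ℂ) = MvPolynomial.eval (v i) p from
      DFunLike.congr_fun (MvPolynomial.coe_aeval_eq_eval (v i)) p]
    exact h
  -- the evaluation functionals on the quotient
  let φ : Fin N → ((MvPolynomial (Fin n) ℂ ⧸ I) →ₐ[ℂ] ℂ) :=
    fun i => Ideal.Quotient.liftₐ I (MvPolynomial.aeval (v i)) (hvan i)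
  have hφmk : ∀ i q, φ i (Ideal.Quotient.mk I q) = MvPolynomial.eval (v i) q := by
    intro i q
    show (Ideal.Quotient.liftₐ I (MvPolynomial.aeval (v i)) (hvan i)) _ = _
    rw [Ideal.Quotient.liftₐ_apply]
    erw [Ideal.Quotient.lift_mk]
  have hφb : ∀ i j, φ i (basis j) = MvPolynomial.eval (v i) (b j) := by
    intro i j; rw [hbasis]; exact hφmk i (b j)
  -- M entries
  have hMentry : ∀ k j, M k j =
      basis.repr (Ideal.Quotient.mk I P * basis j) k := by
    intro k j
    simp [hM, LinearMap.toMatrix_apply, LinearMap.mulLeft_apply,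
      Algebra.leftMulMatrix_eq_repr_mul]
  -- left eigenvector property
  have key : ∀ i : Fin N,
      Matrix.vecMul (fun j => MvPolynomial.eval (v i) (b j)) M =
        MvPolynomial.eval (v i) P • fun j => MvPolynomial.eval (v i) (b j) := by
    intro i
    funext j
    have h1 : Matrix.vecMul (fun j => MvPolynomial.eval (v i) (b j)) M j
        = ∑ k, (φ i (basis k)) * M k j := by
      simp [Matrix.vecMul, dotProduct, hφb]
    have h2 : ∑ k, (φ i (basis k)) * M k j
        = φ i (∑ k, basis.repr (Ideal.Quotient.mk I P * basis j) k • basis k) := by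
      rw [map_sum]
      refine Finset.sum_congr rfl fun k _ => ?_
      rw [_root_.map_smul, hMentry]
      simp [mul_comm, smul_eq_mul]
    have h3 : (∑ k, basis.repr (Ideal.Quotient.mk I P * basis j) k • basis k)
        = Ideal.Quotient.mk I P * basis j := basis.sum_repr _
    have h4 : φ i (Ideal.Quotient.mk I P * basis j)
        = MvPolynomial.eval (v i) P * MvPolynomial.eval (v i) (b j) := by
      rw [_root_.map_mul, hφmk, hφb]
    simp only [h1, h2, h3, h4, Pi.smul_apply, smul_eq_mul]
  refine ⟨?_, key⟩
  -- the matrix of values of the basis at the points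
  set d : Fin N → ℂ := fun i => MvPolynomial.eval (v i) P with hd
  set W : Matrix (Fin N) (Fin N) ℂ :=
    Matrix.of (fun i j => MvPolynomial.eval (v i) (b j)) with hW
  -- W * M = diagonal d * W
  have hWM : W * M = Matrix.diagonal d * W := by
    ext i j
    have h := congrFun (key i) j
    rw [Matrix.mul_apply, Matrix.diagonal_mul]
    simpa [Matrix.vecMul, dotProduct, W, d] using h
  -- Vandermonde argument: W is invertible
  have hWunit : IsUnit W := by
    set C : Matrix (Fin N) (Fin N) ℂ :=
      Matrix.of (fun j k => basis.repr (Ideal.Quotient.mk I (P ^ (k : ℕ))) j) with hC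
    have hWC : W * C = Matrix.vandermonde d := by
      ext i k
      have : (W * C) i k = φ i (∑ j,
          basis.repr (Ideal.Quotient.mk I (P ^ (k : ℕ))) j • basis j) := by
        rw [map_sum]
        simp only [Matrix.mul_apply, W, C, Matrix.of_apply]
        refine Finset.sum_congr rfl fun j _ => ?_
        rw [_root_.map_smul, ← hφb]
        simp [mul_comm, smul_eq_mul]
      rw [this, basis.sum_repr, hφmk]
      simp [Matrix.vandermonde, d]
    have hvdm : (Matrix.vandermonde d).det ≠ 0 := by
      rw [Matrix.det_vandermonde]
      refine Finset.prod_ne_zero_iff.mpr fun i _ => ?_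
      refine Finset.prod_ne_zero_iff.mpr fun j hj => ?_
      have hij : i ≠ j := ne_of_lt (Finset.mem_Ioi.mp hj)
      exact sub_ne_zero.mpr (hsep j i (Ne.symm hij))
    have hdet : W.det ≠ 0 := by
      intro h
      apply hvdm
      rw [← hWC, Matrix.det_mul, h, zero_mul]
    exact (Matrix.isUnit_iff_isUnit_det W).mpr (isUnit_iff_ne_zero.mpr hdet)
  refine ⟨W⁻¹, Matrix.isUnit_nonsing_inv_iff.mpr hWunit, ?_⟩
  have hinv : W⁻¹ * W = 1 := Matrix.nonsing_inv_mul W ((Matrix.isUnit_iff_isUnit_det W).mp hWunit)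
  rw [Matrix.nonsing_inv_nonsing_inv W ((Matrix.isUnit_iff_isUnit_det W).mp hWunit)]
  calc M = (W⁻¹ * W) * M := by rw [hinv, one_mul]
    _ = W⁻¹ * (W * M) := by rw [Matrix.mul_assoc]
    _ = W⁻¹ * (Matrix.diagonal d * W) := by rw [hWM]
    _ = W⁻¹ * Matrix.diagonal d * W := by rw [Matrix.mul_assoc]
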